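/- arXiv:2111.05361 — 3 statements merged into one kernel-verified Lean document; each statement's English description precedes it below -/
import Mathlib

section
/- Let (X, d) be a nonempty complete metric space and let I : X → ℝ be a function satisfying I(x) ≤ 0 for all x ∈ X which is of Baire class 1 (i.e., I is the pointwise limit of a sequence of continuous functions X → ℝ). Let X₀ ⊆ X be a nonempty dense subset such that for every β < 0 there exists α(β) > 0 with the property: for every x ∈ X₀ with I(x) < β there exists a sequence {x_m} ⊆ X₀ with x_m → x in (X, d) and liminf_{m→∞} I(x_m) ≥ I(x) + α(β). Then there exists a comeagre (residual), hence dense, subset S ⊆ X such that I(x) = 0 for every x ∈ S; in fact I vanishes at every point at which I is continuous, and the set of such points is comeagre in X. -/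
open Filter Set

/-- Continuity points of a Baire-1 function on a complete metric space are comeagre. -/
lemma baire1_continuousAt_residual
    {X : Type*} [MetricSpace X] [CompleteSpace X]
    (I : X → ℝ)
    (hBaire1 : ∃ f : ℕ → X → ℝ, (∀ n, Continuous (f n)) ∧
      ∀ x, Filter.Tendsto (fun n => f n x) Filter.atTop (nhds (I x))) :
    {x : X | ContinuousAt I x} ∈ residual X := by
  obtain ⟨f, hfc, hft⟩ := hBaire1
  -- A ε N : points where the tail of f beyond N oscillates at most ε
  set A : ℝ → ℕ → Set X := fun ε N => {x | ∀ m n, N ≤ m → N ≤ n → |f n x - f m x| ≤ ε}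
    with hA
  have hAclosed : ∀ ε N, IsClosed (A ε N) := by
    intro ε N
    have : A ε N = ⋂ (m) (n) (_ : N ≤ m) (_ : N ≤ n), {x | |f n x - f m x| ≤ ε} := by
      ext x; simp [hA, Set.mem_iInter]
    rw [this]
    refine isClosed_iInter fun m => isClosed_iInter fun n =>
      isClosed_iInter fun _ => isClosed_iInter fun _ => ?_
    exact isClosed_le (by continuity) continuous_const
  have hAcover : ∀ ε : ℝ, 0 < ε → (⋃ N, A ε N) = Set.univ := by
    intro ε hε
    ext x
    simp only [Set.mem_iUnion, Set.mem_univ, iff_true]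
    have hc : CauchySeq (fun n => f n x) := (hft x).cauchySeq
    obtain ⟨N, hN⟩ := Metric.cauchySeq_iff'.1 hc (ε / 2) (by linarith)
    refine ⟨N, fun m n hm hn => ?_⟩
    have h1 := hN n hn
    have h2 := hN m hm
    rw [Real.dist_eq] at h1 h2
    have h3 := abs_sub_le (f n x) (f N x) (f m x)
    rw [abs_sub_comm (f N x) (f m x)] at h3
    linarith
  -- key estimate : on A ε N the limit is within ε of f N
  have hlim : ∀ ε N y, y ∈ A ε N → |I y - f N y| ≤ ε := by
    intro ε N y hy
    have h1 : Tendsto (fun n => |f n y - f N y|) atTop (nhds (|I y - f N y|)) :=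
      ((hft y).sub tendsto_const_nhds).abs
    refine le_of_tendsto h1 ?_
    filter_upwards [eventually_ge_atTop N] with n hn
    exact hy N n le_rfl hn
  -- the dense open sets
  set U : ℕ → Set X := fun k => ⋃ N, interior (A (1 / (k + 1 : ℝ)) N) with hU
  have hUopen : ∀ k, IsOpen (U k) := fun k => isOpen_iUnion fun N => isOpen_interior
  have hUdense : ∀ k, Dense (U k) := by
    intro k
    exact dense_iUnion_interior_of_closed (hAclosed _) (hAcover _ (by positivity))
  refine mem_residual.2 ⟨⋂ k, U k, ?_, ?_, ?_⟩
  · -- on the residual set, I is continuous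
    intro x hx
    simp only [Set.mem_iInter] at hx
    refine Metric.tendsto_nhds.2 fun ε hε => ?_
    obtain ⟨k, hk⟩ := exists_nat_gt (3 / ε)
    have hk1 : (0:ℝ) < k + 1 := by positivity
    have hek : 1 / (k + 1 : ℝ) < ε / 3 := by
      rw [div_lt_div_iff₀ hk1 (by norm_num : (0:ℝ) < 3)]
      nlinarith [mul_lt_mul_of_pos_right hk hε, div_mul_cancel₀ (3:ℝ) (ne_of_gt hε)]
    obtain ⟨N, hN⟩ := Set.mem_iUnion.1 (hx k)
    have hxA : x ∈ A (1 / (k + 1 : ℝ)) N := interior_subset hN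
    have hfNc : ContinuousAt (f N) x := (hfc N).continuousAt
    have hev1 : ∀ᶠ y in nhds x, y ∈ A (1 / (k + 1 : ℝ)) N :=
      eventually_of_mem (mem_interior_iff_mem_nhds.1 hN) fun y hy => hy
    have hev2 : ∀ᶠ y in nhds x, |f N y - f N x| < 1 / (k + 1 : ℝ) := by
      have := Metric.tendsto_nhds.1 hfNc (1 / (k + 1 : ℝ)) (by positivity)
      simpa [Real.dist_eq] using this
    filter_upwards [hev1, hev2] with y hy1 hy2
    have e1 : |I y - f N y| ≤ 1 / (k + 1 : ℝ) := hlim _ _ _ hy1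
    have e2 : |f N x - I x| ≤ 1 / (k + 1 : ℝ) := by
      have := hlim _ _ _ hxA; rwa [abs_sub_comm]
    rw [Real.dist_eq]
    calc |I y - I x| = |(I y - f N y) + (f N y - f N x) + (f N x - I x)| := by ring_nf
      _ ≤ |(I y - f N y) + (f N y - f N x)| + |f N x - I x| := abs_add_le _ _
      _ ≤ |I y - f N y| + |f N y - f N x| + |f N x - I x| := by
          gcongr; exact abs_add_le _ _
      _ < ε := by linarith
  · exact IsGδ.iInter fun k => (hUopen k).isGδ
  · exact dense_iInter_of_isOpen hUopen hUdense

/-- Abstract Baire-category tool of convex integration: if `I : X → ℝ` is a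
nonpositive Baire class-1 function on a nonempty complete metric space, `X₀` is a
nonempty dense subset, and every `x ∈ X₀` with `I x < β < 0` admits approximating
sequences in `X₀` improving `I` by a fixed amount `α β > 0`, then `I` vanishes on a
comeagre set; in fact `I` vanishes at every continuity point of `I`, and those
points form a comeagre set. -/
theorem baire_category_convex_integration
    {X : Type*} [MetricSpace X] [CompleteSpace X] [Nonempty X]
    (I : X → ℝ) (hneg : ∀ x, I x ≤ 0)
    (hBaire1 : ∃ f : ℕ → X → ℝ, (∀ n, Continuous (f n)) ∧
      ∀ x, Filter.Tendsto (fun n => f n x) Filter.atTop (nhds (I x)))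
    (X₀ : Set X) (hX₀ne : X₀.Nonempty) (hX₀dense : Dense X₀)
    (himprove : ∀ β : ℝ, β < 0 → ∃ α : ℝ, 0 < α ∧
      ∀ x ∈ X₀, I x < β →
        ∃ u : ℕ → X, (∀ m, u m ∈ X₀) ∧
          Filter.Tendsto u Filter.atTop (nhds x) ∧
          I x + α ≤ Filter.liminf (fun m => I (u m)) Filter.atTop) :
    (∃ S : Set X, S ∈ residual X ∧ ∀ x ∈ S, I x = 0) ∧
    (∀ x : X, ContinuousAt I x → I x = 0) ∧
    {x : X | ContinuousAt I x} ∈ residual X := by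
  have hres := baire1_continuousAt_residual I hBaire1
  have hcont : ∀ x : X, ContinuousAt I x → I x = 0 := by
    intro x hxcont
    by_contra h
    have hIx : I x < 0 := lt_of_le_of_ne (hneg x) h
    set β : ℝ := I x / 2 with hβ
    have hβneg : β < 0 := by simp [hβ]; linarith
    obtain ⟨α, hα, himp⟩ := himprove β hβneg
    set ε : ℝ := min (α / 3) (-I x / 4) with hε
    have hεpos : 0 < ε := by
      apply lt_min (by linarith) (by linarith)
    -- by continuity, find a neighbourhood where |I y - I x| < ε
    have hev : ∀ᶠ y in nhds x, |I y - I x| < ε := by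
      have := Metric.tendsto_nhds.1 hxcont ε hεpos
      simpa [Real.dist_eq] using this
    obtain ⟨δ, hδpos, hδ⟩ := Metric.eventually_nhds_iff.1 hev
    -- pick x₀ ∈ X₀ within δ of x
    obtain ⟨x₀, hx₀X₀, hx₀d⟩ : ∃ x₀ ∈ X₀, dist x₀ x < δ / 2 := by
      have := hX₀dense x
      rw [Metric.mem_closure_iff] at this
      obtain ⟨x₀, hx₀, hd⟩ := this (δ / 2) (by linarith)
      exact ⟨x₀, hx₀, by rw [dist_comm]; exact hd⟩
    have hIx₀ : |I x₀ - I x| < ε := hδ (by linarith)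
    have hIx₀β : I x₀ < β := by
      have h1 : I x₀ < I x + ε := by
        have := abs_lt.1 hIx₀; linarith [this.2]
      have h2 : ε ≤ -I x / 4 := min_le_right _ _
      have : I x + ε ≤ I x - I x / 4 := by linarith
      rw [hβ]; linarith
    obtain ⟨u, huX₀, hulim, huinf⟩ := himp x₀ hx₀X₀ hIx₀β
    -- eventually u m is within δ of x, so I (u m) < I x + ε
    have hev2 : ∀ᶠ m in atTop, |I (u m) - I x| < ε := by
      have : ∀ᶠ m in atTop, dist (u m) x < δ := by
        have h1 : Tendsto (fun m => dist (u m) x) atTop (nhds (dist x₀ x)) :=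
          (hulim.dist tendsto_const_nhds)
        have h2 : dist x₀ x < δ := by linarith
        exact h1.eventually_lt_const h2
      filter_upwards [this] with m hm
      exact hδ hm
    have hev3 : ∀ᶠ m in atTop, I (u m) < I x + ε := by
      filter_upwards [hev2] with m hm
      linarith [(abs_lt.1 hm).2]
    -- liminf lower bound gives frequently I (u m) > I x + ε, contradiction
    have hεα : ε ≤ α / 3 := min_le_left _ _
    have hlower : I x + ε < I x₀ + α := by
      have := abs_lt.1 hIx₀
      linarith [this.1]
    have hbdd : IsBoundedUnder (· ≥ ·) atTop (fun m => I (u m)) := by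
      refine ⟨I x - ε, ?_⟩
      rw [Filter.eventually_map]
      filter_upwards [hev2] with m hm
      linarith [(abs_lt.1 hm).1]
    have hfreq : ∀ᶠ m in atTop, I x + ε < I (u m) :=
      Filter.eventually_lt_of_lt_liminf (lt_of_lt_of_le hlower huinf) hbdd
    obtain ⟨m, hm1, hm2⟩ := (hfreq.and hev3).exists
    linarith
  refine ⟨⟨{x : X | ContinuousAt I x}, hres, fun x hx => hcont x hx⟩, hcont, hres⟩
end

section
/- Let k, λ > 0. The Yukawa kernel G(x; k, λ) = k·e^{−λ‖x‖}/‖x‖ is differentiable at every x ∈ ℝ³ \ {0} with gradient ∇G(x; k, λ) = −k·e^{−λ‖x‖}(1 + λ‖x‖)·x/‖x‖³, and the function x ↦ ‖∇G(x; k, λ)‖ is integrable over ℝ³ with ∫_{ℝ³} ‖∇G(x; k, λ)‖ dx = 8πk/λ. -/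
open MeasureTheory Set Metric Filter

local notation "E3" => EuclideanSpace ℝ (Fin 3)

private lemma hasFDerivAt_norm_ne_zero {E : Type*} [NormedAddCommGroup E]
    [InnerProductSpace ℝ E] {x : E} (hx : x ≠ 0) :
    HasFDerivAt (fun z : E => ‖z‖) (‖x‖⁻¹ • innerSL ℝ x) x := by
  have hx' : (0:ℝ) < ‖x‖ := norm_pos_iff.2 hx
  have h1 : HasFDerivAt (fun z : E => ‖z‖ ^ 2) (2 • innerSL ℝ x) x :=
    (hasStrictFDerivAt_norm_sq x).hasFDerivAt
  have h2 : HasDerivAt Real.sqrt (1 / (2 * Real.sqrt (‖x‖ ^ 2))) (‖x‖ ^ 2) :=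
    Real.hasDerivAt_sqrt (by positivity)
  have h3 := h2.comp_hasFDerivAt x h1
  have hfun : (fun z : E => Real.sqrt (‖z‖ ^ 2)) = fun z : E => ‖z‖ :=
    funext fun z => Real.sqrt_sq (norm_nonneg z)
  rw [show (Real.sqrt ∘ fun z : E => ‖z‖ ^ 2) = fun z : E => Real.sqrt (‖z‖ ^ 2) from rfl,
    hfun] at h3
  refine h3.congr_fderiv ?_
  rw [Real.sqrt_sq hx'.le]
  ext y
  simp [smul_smul]
  field_simp

private lemma integrable_fun_norm_E3 (f : ℝ → ℝ) (hmeas : Measurable f)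
    (hf : IntegrableOn (fun r : ℝ => r ^ 2 * f r) (Ioi (0:ℝ))) :
    Integrable (fun x : E3 => f ‖x‖) := by
  have hms : MeasurableSet ({(0 : E3)}ᶜ) := (measurableSet_singleton _).compl
  have h0 : (volume : Measure E3).restrict ({(0:E3)}ᶜ) = volume := restrict_compl_singleton _
  rw [← h0, ← map_comap_subtype_coe hms volume,
    (MeasurableEmbedding.subtype_coe hms).integrable_map_iff]
  have hmp := (volume : Measure E3).measurePreserving_homeomorphUnitSphereProd
  have key := hmp.integrable_comp_emb
    (Homeomorph.measurableEmbedding (homeomorphUnitSphereProd E3))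
    (g := fun p : sphere (0:E3) 1 × Ioi (0:ℝ) => f p.2)
  have hdim : Module.finrank ℝ E3 = 3 := finrank_euclideanSpace_fin
  rw [hdim] at key
  have hcomp : ((fun p : sphere (0:E3) 1 × Ioi (0:ℝ) => f p.2) ∘
      (homeomorphUnitSphereProd E3)) = (fun x : ({(0:E3)}ᶜ : Set E3) => f ‖(x : E3)‖) := by
    funext x; simp [homeomorphUnitSphereProd, homeomorphSphereProd]
  rw [hcomp] at key
  apply key.mpr
  -- now integrability on the product measure
  have hIoi : Integrable (fun r : (Ioi (0:ℝ)) => f r) (Measure.volumeIoiPow (3 - 1)) := by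
    rw [show (3:ℕ) - 1 = 2 from rfl, Measure.volumeIoiPow,
      integrable_withDensity_iff ((measurable_subtype_coe.pow_const 2).ennreal_ofReal)
        (Eventually.of_forall fun _ => ENNReal.ofReal_lt_top)]
    have : (fun r : (Ioi (0:ℝ)) => f r * (ENNReal.ofReal ((r:ℝ) ^ 2)).toReal)
        = fun r : (Ioi (0:ℝ)) => (r:ℝ) ^ 2 * f (r:ℝ) := by
      funext r
      rw [ENNReal.toReal_ofReal (by positivity), mul_comm]
    rw [this]
    have h3 : Integrable (fun r : ℝ => r ^ 2 * f r) (Measure.map Subtype.val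
        (Measure.comap (Subtype.val : (Ioi (0:ℝ)) → ℝ) volume)) := by
      rw [map_comap_subtype_coe measurableSet_Ioi volume]; exact hf
    exact (MeasurableEmbedding.subtype_coe measurableSet_Ioi).integrable_map_iff.mp h3
  have hfin : (volume : Measure E3).toSphere univ ≠ ⊤ := measure_ne_top _ _
  have h2 : Integrable (fun r : (Ioi (0:ℝ)) => f r)
      (((volume : Measure E3).toSphere univ) • Measure.volumeIoiPow (3 - 1)) :=
    hIoi.smul_measure hfin
  rw [← Measure.map_snd_prod] at h2
  exact h2.comp_measurable measurable_snd

/-- For `k, λ > 0`, the Yukawa kernel `G(x) = k e^{−λ‖x‖}/‖x‖` is differentiable at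
every `x ≠ 0` with gradient `−k e^{−λ‖x‖}(1 + λ‖x‖) x/‖x‖³`, and `‖∇G‖` is
integrable over `ℝ³` with integral `8πk/λ`. -/
theorem yukawa_gradient_integrable (k lam : ℝ) (hk : 0 < k) (hlam : 0 < lam) :
    (∀ x : EuclideanSpace ℝ (Fin 3), x ≠ 0 →
      HasGradientAt (fun z : EuclideanSpace ℝ (Fin 3) => k * Real.exp (-lam * ‖z‖) / ‖z‖)
        ((-(k * Real.exp (-lam * ‖x‖) * (1 + lam * ‖x‖) / ‖x‖ ^ 3)) • x) x) ∧
    Integrable (fun x : EuclideanSpace ℝ (Fin 3) =>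
      ‖(-(k * Real.exp (-lam * ‖x‖) * (1 + lam * ‖x‖) / ‖x‖ ^ 3)) • x‖) ∧
    ∫ x : EuclideanSpace ℝ (Fin 3),
        ‖(-(k * Real.exp (-lam * ‖x‖) * (1 + lam * ‖x‖) / ‖x‖ ^ 3)) • x‖
      = 8 * Real.pi * k / lam := by
  -- the norm of the gradient as a function of ‖x‖
  set f : ℝ → ℝ := fun r => k * Real.exp (-lam * r) * (1 + lam * r) / r ^ 3 * r with hf_def
  have hnorm_eq : ∀ x : E3,
      ‖(-(k * Real.exp (-lam * ‖x‖) * (1 + lam * ‖x‖) / ‖x‖ ^ 3)) • x‖ = f ‖x‖ := by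
    intro x
    rw [norm_smul, Real.norm_eq_abs, abs_neg, abs_of_nonneg (by positivity)]
  have hmeas : Measurable f := by
    apply Measurable.mul _ measurable_id
    exact (((measurable_id.const_mul (-lam)).exp.const_mul k).mul
      ((measurable_id.const_mul lam).const_add 1)).div (measurable_id.pow_const 3)
  -- pointwise simplification on Ioi 0
  have hf_on : ∀ r ∈ Ioi (0:ℝ), r ^ 2 * f r = k * Real.exp (-lam * r) * (1 + lam * r) := by
    intro r hr
    have hr' : (0:ℝ) < r := hr
    simp only [hf_def]
    field_simp
  -- 1-D integrability
  have hint1d : IntegrableOn (fun r : ℝ => k * Real.exp (-lam * r) * (1 + lam * r))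
      (Ioi (0:ℝ)) := by
    have h1 : IntegrableOn (fun r : ℝ => Real.exp (-lam * r)) (Ioi (0:ℝ)) :=
      exp_neg_integrableOn_Ioi 0 hlam
    have h2 : IntegrableOn (fun r : ℝ => r * Real.exp (-lam * r)) (Ioi (0:ℝ)) := by
      have h := integrableOn_rpow_mul_exp_neg_mul_rpow
        (show (-1:ℝ) < 1 by norm_num) one_pos hlam
      refine IntegrableOn.congr_fun h (fun r hr => ?_) measurableSet_Ioi
      simp [Real.rpow_one]
    have h : IntegrableOn (fun r : ℝ => k * Real.exp (-lam * r) + k * lam * (r * Real.exp (-lam * r)))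
        (Ioi (0:ℝ)) := (h1.const_mul k).add ((h2.const_mul (k * lam)))
    refine IntegrableOn.congr_fun h (fun r hr => ?_) measurableSet_Ioi
    ring
  have hint : IntegrableOn (fun r : ℝ => r ^ 2 * f r) (Ioi (0:ℝ)) :=
    hint1d.congr_fun (fun r hr => (hf_on r hr).symm) measurableSet_Ioi
  have hintegrable : Integrable (fun x : E3 => f ‖x‖) := integrable_fun_norm_E3 f hmeas hint
  -- value of the 1-D integral
  have h1d_val : ∫ r in Ioi (0:ℝ), r ^ 2 * f r = 2 * k / lam := by
    rw [setIntegral_congr_fun measurableSet_Ioi hf_on]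
    have hF : ∀ r ∈ Ici (0:ℝ), HasDerivAt (fun r : ℝ => -((2 * k / lam + k * r) * Real.exp (-lam * r)))
        (k * Real.exp (-lam * r) * (1 + lam * r)) r := by
      intro r _
      have h1 : HasDerivAt (fun r : ℝ => -lam * r) (-lam) r := by
        simpa using (hasDerivAt_id r).const_mul (-lam)
      have h2 : HasDerivAt (fun r : ℝ => Real.exp (-lam * r)) (Real.exp (-lam * r) * (-lam)) r :=
        h1.exp
      have h3 : HasDerivAt (fun r : ℝ => 2 * k / lam + k * r) k r := by
        simpa using ((hasDerivAt_id r).const_mul k).const_add (2 * k / lam)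
      have h4 := (h3.mul h2).neg
      refine HasDerivAt.congr_deriv (f := fun r : ℝ => -((2 * k / lam + k * r) * Real.exp (-lam * r))) h4 ?_
      field_simp
      ring
    have hlim : Tendsto (fun r : ℝ => -((2 * k / lam + k * r) * Real.exp (-lam * r)))
        atTop (nhds 0) := by
      have e0 : Tendsto (fun r : ℝ => Real.exp (-lam * r)) atTop (nhds 0) := by
        have := Real.tendsto_exp_neg_atTop_nhds_zero.comp
          (Tendsto.const_mul_atTop hlam tendsto_id)
        refine this.congr fun r => ?_
        simp [Function.comp, neg_mul]
      have e1 : Tendsto (fun r : ℝ => r * Real.exp (-lam * r)) atTop (nhds 0) := by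
        have h := tendsto_rpow_mul_exp_neg_mul_atTop_nhds_zero 1 lam hlam
        refine h.congr' ?_
        filter_upwards [eventually_gt_atTop (0:ℝ)] with r hr
        rw [Real.rpow_one]
      have h := ((e0.const_mul (2 * k / lam)).add (e1.const_mul k)).neg
      simp only [mul_zero, add_zero, neg_zero] at h
      refine h.congr fun r => by ring
    have hval := integral_Ioi_of_hasDerivAt_of_tendsto' hF hint1d hlim
    rw [hval]
    norm_num
  -- volume of the unit ball
  have hball : ((volume : Measure E3) (ball 0 1)).toReal = 4 / 3 * Real.pi := by
    rw [EuclideanSpace.volume_ball (Fin 3) 0 1]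
    have hcard : Fintype.card (Fin 3) = 3 := by simp
    rw [hcard]
    have hGamma : Real.Gamma ((3:ℕ) / 2 + 1) = 3 / 4 * Real.sqrt Real.pi := by
      have h32 : ((3:ℕ):ℝ) / 2 + 1 = 3 / 2 + 1 := by norm_num
      rw [h32, Real.Gamma_add_one (by norm_num)]
      have : (3:ℝ) / 2 = 1 / 2 + 1 := by norm_num
      rw [this, Real.Gamma_add_one (by norm_num), Real.Gamma_one_half_eq]
      ring
    rw [hGamma]
    have hsq : Real.sqrt Real.pi ^ 3 / (3 / 4 * Real.sqrt Real.pi) = 4 / 3 * Real.pi := by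
      have h : Real.sqrt Real.pi ^ 2 = Real.pi := Real.sq_sqrt Real.pi_nonneg
      have hs : Real.sqrt Real.pi > 0 := Real.sqrt_pos.2 Real.pi_pos
      field_simp
      nlinarith [h]
    rw [hsq]
    simp [ENNReal.toReal_ofReal (by positivity : (0:ℝ) ≤ 4 / 3 * Real.pi)]
  -- main integral value via polar coordinates
  have hval : ∫ x : E3, f ‖x‖ = 8 * Real.pi * k / lam := by
    rw [integral_fun_norm_addHaar (volume : Measure E3) f]
    rw [finrank_euclideanSpace_fin]
    simp only [nsmul_eq_mul, smul_eq_mul, Nat.cast_ofNat]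
    have h2 : ∫ y in Ioi (0:ℝ), y ^ (3 - 1) * f y = 2 * k / lam := by
      simpa using h1d_val
    rw [h2, measureReal_def, hball]
    field_simp
    ring
  refine ⟨?_, ?_, ?_⟩
  · -- gradient
    intro x hx
    have hr : (0:ℝ) < ‖x‖ := norm_pos_iff.2 hx
    have hN := hasFDerivAt_norm_ne_zero hx
    have h1 : HasDerivAt (fun r : ℝ => -lam * r) (-lam) ‖x‖ := by
      simpa using (hasDerivAt_id ‖x‖).const_mul (-lam)
    have h2 : HasDerivAt (fun r : ℝ => k * Real.exp (-lam * r))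
        (k * (Real.exp (-lam * ‖x‖) * (-lam))) ‖x‖ := (h1.exp).const_mul k
    have h3 : HasDerivAt (fun r : ℝ => k * Real.exp (-lam * r) / r)
        ((k * (Real.exp (-lam * ‖x‖) * (-lam)) * ‖x‖ - k * Real.exp (-lam * ‖x‖) * 1) / ‖x‖ ^ 2)
        ‖x‖ := h2.div (hasDerivAt_id _) hr.ne'
    have h4 := h3.comp_hasFDerivAt x hN
    rw [hasGradientAt_iff_hasFDerivAt]
    refine h4.congr_fderiv ?_ |>.congr_of_eventuallyEq (Eventually.of_forall fun _ => rfl)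
    ext y
    have hne : (‖x‖ : ℝ) ≠ 0 := hr.ne'
    simp only [InnerProductSpace.toDual_apply_apply, real_inner_smul_left,
      ContinuousLinearMap.coe_smul', Pi.smul_apply, smul_eq_mul, innerSL_apply_apply]
    field_simp
    ring
  · -- integrability
    have := hintegrable
    refine this.congr ?_
    exact Eventually.of_forall fun x => (hnorm_eq x).symm
  · -- integral value
    calc ∫ x : E3, ‖(-(k * Real.exp (-lam * ‖x‖) * (1 + lam * ‖x‖) / ‖x‖ ^ 3)) • x‖
        = ∫ x : E3, f ‖x‖ := by
          exact integral_congr_ae (Eventually.of_forall fun x => hnorm_eq x)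
      _ = 8 * Real.pi * k / lam := hval
end

section
/- Let k, λ > 0, let D ⊂ ℝ³ be a bounded measurable set, let ρ : ℝ³ → ℝ be measurable, supported in D, with 0 ≤ ρ(x) ≤ ρ̄ for a.e. x, and let g ∈ L²(ℝ³; ℝ³) be supported in D. Then, writing G = G(·; k, λ) for the Yukawa kernel, | ∫_{ℝ³} [ (G * (ρg))(x)^⊤ (ρ(x) g(x)) − (G * ρ)(x)·ρ(x)‖g(x)‖² ] dx | ≤ (8πk ρ̄/λ²) · ∫_{ℝ³} ρ(x)‖g(x)‖² dx. -/
open MeasureTheory Set Metric Module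
open scoped ENNReal

local notation "E3" => EuclideanSpace ℝ (Fin 3)

theorem lint_polar (f : ℝ → ENNReal) (hf : Measurable f) :
    ∫⁻ x : E3, f ‖x‖ = 3 * volume (ball (0:E3) 1) *
      ∫⁻ y in Ioi (0:ℝ), ENNReal.ofReal (y ^ 2) * f y := by
  have hdim : finrank ℝ E3 = 3 := by simp [finrank_euclideanSpace]
  have h0 : ∫⁻ x : E3, f ‖x‖ = ∫⁻ x : ({(0:E3)}ᶜ : Set E3), f ‖x.1‖ ∂((volume : Measure E3).comap (↑)) := by
    rw [lintegral_subtype_comap (measurableSet_singleton (0:E3)).compl (fun x => f ‖x‖),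
      restrict_compl_singleton]
  have h1 := (Measure.measurePreserving_homeomorphUnitSphereProd (volume : Measure E3)).lintegral_comp
    (f := fun p : sphere (0:E3) 1 × Ioi (0:ℝ) => f p.2) (by fun_prop)
  rw [hdim] at h1
  norm_num at h1
  rw [h0, h1]
  rw [lintegral_prod _ (by fun_prop)]
  simp only [lintegral_const]  -- inner integral doesn't depend on x? no, integrand after prod: ∫⁻ s, ∫⁻ r, f r
  rw [Measure.volumeIoiPow, lintegral_withDensity_eq_lintegral_mul _ (by fun_prop) (by fun_prop)]
  simp only [Pi.mul_apply]
  rw [lintegral_subtype_comap measurableSet_Ioi (fun y => ENNReal.ofReal (y^2) * f y)]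
  rw [Measure.toSphere_apply_univ, hdim]
  ring

theorem gamma52 : Real.Gamma ((3:ℝ)/2 + 1) = 3/4 * Real.sqrt Real.pi := by
  rw [Real.Gamma_add_one (by norm_num)]
  have : (3:ℝ)/2 = 1/2 + 1 := by norm_num
  rw [this, Real.Gamma_add_one (by norm_num), Real.Gamma_one_half_eq]
  ring

theorem vol_ball3 : volume (ball (0:E3) 1) = ENNReal.ofReal (4 * Real.pi / 3) := by
  rw [EuclideanSpace.volume_ball]
  have hc : Fintype.card (Fin 3) = 3 := by simp
  rw [hc]
  have : ((3:ℕ):ℝ)/2 + 1 = (3:ℝ)/2 + 1 := by norm_num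
  rw [this, gamma52]
  have hπ : (0:ℝ) ≤ Real.pi := Real.pi_nonneg
  have hs : Real.sqrt Real.pi ^ 3 = Real.pi * Real.sqrt Real.pi := by
    have := Real.sq_sqrt hπ
    nlinarith [Real.sqrt_nonneg Real.pi]
  rw [hs]
  have hsp : Real.sqrt Real.pi > 0 := Real.sqrt_pos.mpr Real.pi_pos
  norm_num
  congr 1
  field_simp

theorem yukawa_lint (k lam : ℝ) (hk : 0 < k) (hlam : 0 < lam) :
    ∫⁻ z : E3, ENNReal.ofReal (k * Real.exp (-lam * ‖z‖) / ‖z‖)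
      = ENNReal.ofReal (4 * Real.pi * k / lam ^ 2) := by
  have hmf : Measurable (fun r : ℝ => ENNReal.ofReal (k * Real.exp (-lam * r) / r)) := by fun_prop
  rw [lint_polar _ hmf, vol_ball3]
  have hcongr : ∫⁻ y in Ioi (0:ℝ), ENNReal.ofReal (y ^ 2) * ENNReal.ofReal (k * Real.exp (-lam * y) / y)
      = ∫⁻ y in Ioi (0:ℝ), ENNReal.ofReal (y * Real.exp (-(lam * y)) * k) := by
    refine setLIntegral_congr_fun measurableSet_Ioi (fun y hy => ?_)
    have hy0 : (0:ℝ) < y := hy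
    rw [← ENNReal.ofReal_mul (by positivity)]
    congr 1
    rw [neg_mul]
    field_simp
  rw [hcongr]
  have hint : IntegrableOn (fun y : ℝ => y * Real.exp (-(lam * y)) * k) (Ioi 0) := by
    have h := integrableOn_rpow_mul_exp_neg_mul_rpow (p := 1) (s := 1) (b := lam)
      (by norm_num) (by norm_num) hlam
    simp only [Real.rpow_one, neg_mul] at h ⊢
    exact h.mul_const k
  rw [← ofReal_integral_eq_lintegral_ofReal hint
    (((ae_restrict_mem measurableSet_Ioi).mono fun y hy => ?_))]
  swap
  · have hy0 : (0:ℝ) < y := hy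
    positivity
  have hval := Real.integral_rpow_mul_exp_neg_mul_Ioi (a := 2) (r := lam) two_pos hlam
  norm_num at hval
  rw [MeasureTheory.integral_mul_const, hval]
  rw [show (3:ℝ≥0∞) = ENNReal.ofReal 3 by simp, ← ENNReal.ofReal_mul (by norm_num),
    ← ENNReal.ofReal_mul (by positivity)]
  congr 1
  field_simp


theorem lint_sub_left (f : EuclideanSpace ℝ (Fin 3) → ENNReal) (x : EuclideanSpace ℝ (Fin 3)) :
    ∫⁻ y, f (x - y) = ∫⁻ y, f y := by
  have hco : ⇑(MeasurableEquiv.neg (EuclideanSpace ℝ (Fin 3))) = (Neg.neg : EuclideanSpace ℝ (Fin 3) → _) := rfl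
  have h1 := lintegral_map_equiv (fun y => f (x + y)) (MeasurableEquiv.neg (EuclideanSpace ℝ (Fin 3))) (μ := volume)
  rw [hco, Measure.map_neg_eq_self] at h1
  simp only [← sub_eq_add_neg] at h1
  rw [← h1, lintegral_add_left_eq_self]

theorem aux_bound (k lam : ℝ) (hk : 0 < k) (hlam : 0 < lam)
    (ρ : E3 → ℝ) (hρm : Measurable ρ)
    (ρb : ℝ) (hρ0 : ∀ x, 0 ≤ ρ x) (hρb : ∀ x, ρ x ≤ ρb)
    (g : E3 → E3) (hgm : Measurable g)
    (hg : MemLp g 2 (volume : Measure E3)) :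
    |∫ x : E3,
        (inner (𝕜 := ℝ)
            (∫ y, (k * Real.exp (-lam * ‖x - y‖) / ‖x - y‖) • (ρ y • g y))
            (ρ x • g x)
          - (∫ y, k * Real.exp (-lam * ‖x - y‖) / ‖x - y‖ * ρ y)
              * (ρ x * ‖g x‖ ^ 2))|
      ≤ 8 * Real.pi * k * ρb / lam ^ 2
          * ∫ x : E3, ρ x * ‖g x‖ ^ 2 := by
  have hρb0 : 0 ≤ ρb := le_trans (hρ0 0) (hρb 0)
  set G : E3 → ℝ := fun z => k * Real.exp (-lam * ‖z‖) / ‖z‖ with hGdef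
  have hG0 : ∀ z, 0 ≤ G z := fun z => by
    have := Real.exp_pos (-lam * ‖z‖); positivity
  have hGm : Measurable G := by fun_prop
  set Ge : E3 → ℝ≥0∞ := fun z => ENNReal.ofReal (G z) with hGedef
  have hGem : Measurable Ge := hGm.ennreal_ofReal
  set h : E3 → ℝ := fun x => ρ x * ‖g x‖ ^ 2 with hhdef
  have hh0 : ∀ x, 0 ≤ h x := fun x => mul_nonneg (hρ0 x) (by positivity)
  set H : E3 → ℝ≥0∞ := fun x => ENNReal.ofReal (h x) with hHdef
  have hHm : Measurable H := by
    apply Measurable.ennreal_ofReal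
    fun_prop
  set Q : E3 → ℝ≥0∞ := fun x => ENNReal.ofReal (ρ x * ‖g x‖) with hQdef
  have hQm : Measurable Q := by
    apply Measurable.ennreal_ofReal; fun_prop
  set R : E3 → ℝ≥0∞ := fun x => ENNReal.ofReal (ρ x) with hRdef
  have hRm : Measurable R := hρm.ennreal_ofReal
  -- integrability of h
  have hg2 : Integrable (fun x : E3 => ‖g x‖ ^ 2) volume := by
    have := hg.integrable_norm_rpow (by norm_num) (by norm_num)
    simpa [ENNReal.toReal_ofNat, Real.rpow_natCast] using this
  have hh_int : Integrable h volume := by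
    refine hg2.bdd_mul (c := ρb) hρm.aestronglyMeasurable (Filter.Eventually.of_forall fun x => ?_)
    rw [Real.norm_eq_abs, abs_of_nonneg (hρ0 x)]; exact hρb x
  have hIh0 : 0 ≤ ∫ x, h x := integral_nonneg hh0
  have hHlint : ∫⁻ x, H x = ENNReal.ofReal (∫ x, h x) :=
    (ofReal_integral_eq_lintegral_ofReal hh_int (Filter.Eventually.of_forall hh0)).symm
  have hIG : ∫⁻ z, Ge z = ENNReal.ofReal (4 * Real.pi * k / lam ^ 2) := yukawa_lint k lam hk hlam
  -- rewrite the goal in terms of G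
  simp only [show ∀ x y : E3, k * Real.exp (-lam * ‖x - y‖) / ‖x - y‖ = G (x - y) from
    fun _ _ => rfl]
  set f : E3 → ℝ := fun x =>
    inner (𝕜 := ℝ) (∫ y, G (x - y) • (ρ y • g y)) (ρ x • g x)
      - (∫ y, G (x - y) * ρ y) * (ρ x * ‖g x‖ ^ 2) with hfdef
  show |∫ x, f x| ≤ 8 * Real.pi * k * ρb / lam ^ 2 * ∫ x, h x
  -- pointwise bound on the integrand
  have key : ∀ x : E3, (‖f x‖₊ : ℝ≥0∞) ≤
      (∫⁻ y, Ge (x - y) * Q y) * Q x + (∫⁻ y, Ge (x - y) * R y) * H x := by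
    intro x
    have h1 : (‖f x‖₊ : ℝ≥0∞) ≤
        (‖inner (𝕜 := ℝ) (∫ y, G (x - y) • (ρ y • g y)) (ρ x • g x)‖₊ : ℝ≥0∞)
          + (‖(∫ y, G (x - y) * ρ y) * (ρ x * ‖g x‖ ^ 2)‖₊ : ℝ≥0∞) := by
      rw [← ENNReal.coe_add]
      exact_mod_cast nnnorm_sub_le _ _
    refine h1.trans (add_le_add ?_ ?_)
    · -- inner product term
      have h2 : (‖inner (𝕜 := ℝ) (∫ y, G (x - y) • (ρ y • g y)) (ρ x • g x)‖₊ : ℝ≥0∞)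
          ≤ (‖∫ y, G (x - y) • (ρ y • g y)‖₊ : ℝ≥0∞) * (‖ρ x • g x‖₊ : ℝ≥0∞) := by
        rw [← ENNReal.coe_mul]
        exact_mod_cast nnnorm_inner_le_nnnorm _ _
      refine h2.trans (mul_le_mul' ?_ ?_)
      · refine (enorm_integral_le_lintegral_enorm _).trans (le_of_eq ?_)
        refine lintegral_congr fun y => ?_
        rw [← ofReal_norm, norm_smul, norm_smul, Real.norm_eq_abs,
          Real.norm_eq_abs, abs_of_nonneg (hG0 (x - y)), abs_of_nonneg (hρ0 y),
          ENNReal.ofReal_mul (hG0 (x - y))]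
      · refine le_of_eq ?_
        rw [← enorm_eq_nnnorm, ← ofReal_norm, norm_smul, Real.norm_eq_abs,
          abs_of_nonneg (hρ0 x)]
    · have h3 : (‖(∫ y, G (x - y) * ρ y) * (ρ x * ‖g x‖ ^ 2)‖₊ : ℝ≥0∞)
          = (‖∫ y, G (x - y) * ρ y‖₊ : ℝ≥0∞) * (‖ρ x * ‖g x‖ ^ 2‖₊ : ℝ≥0∞) := by
        rw [← ENNReal.coe_mul, nnnorm_mul]
      rw [h3]
      refine mul_le_mul' ?_ (le_of_eq ?_)
      · refine (enorm_integral_le_lintegral_enorm _).trans (le_of_eq ?_)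
        refine lintegral_congr fun y => ?_
        rw [← ofReal_norm, Real.norm_eq_abs,
          abs_of_nonneg (mul_nonneg (hG0 (x - y)) (hρ0 y)),
          ENNReal.ofReal_mul (hG0 (x - y))]
      · exact Real.enorm_eq_ofReal (hh0 x)
  -- measurability helpers
  have hGsub : ∀ x : E3, Measurable fun y => Ge (x - y) :=
    fun x => hGem.comp (measurable_const.sub measurable_id)
  have hGsub' : ∀ y : E3, Measurable fun x => Ge (x - y) :=
    fun y => hGem.comp (measurable_id.sub measurable_const)
  -- key real inequality
  have hreal : ∀ x y : E3, ρ y * ‖g y‖ * (ρ x * ‖g x‖) + ρ y * h x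
      ≤ 3/2 * ρb * h x + ρb/2 * h y := by
    intro x y
    have ha : Real.sqrt (ρ x) ^ 2 = ρ x := Real.sq_sqrt (hρ0 x)
    have hb : Real.sqrt (ρ y) ^ 2 = ρ y := Real.sq_sqrt (hρ0 y)
    have ha0 : 0 ≤ Real.sqrt (ρ x) := Real.sqrt_nonneg _
    have hb0 : 0 ≤ Real.sqrt (ρ y) := Real.sqrt_nonneg _
    set a := Real.sqrt (ρ x)
    set b := Real.sqrt (ρ y)
    have hab : a * b ≤ ρb := by
      have h1 : a * b = Real.sqrt (ρ x * ρ y) := (Real.sqrt_mul (hρ0 x) _).symm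
      rw [h1]
      calc Real.sqrt (ρ x * ρ y) ≤ Real.sqrt (ρb * ρb) :=
            Real.sqrt_le_sqrt (mul_le_mul (hρb x) (hρb y) (hρ0 y) hρb0)
        _ = ρb := Real.sqrt_mul_self hρb0
    have hx2 : h x = ρ x * ‖g x‖ ^ 2 := rfl
    have hy2 : h y = ρ y * ‖g y‖ ^ 2 := rfl
    rw [hx2, hy2, ← ha, ← hb]
    nlinarith [mul_nonneg (mul_nonneg ha0 hb0) (sq_nonneg (a * ‖g x‖ - b * ‖g y‖)),
      mul_nonneg (sub_nonneg.2 hab)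
        (add_nonneg (mul_nonneg (sq_nonneg a) (sq_nonneg ‖g x‖))
          (mul_nonneg (sq_nonneg b) (sq_nonneg ‖g y‖))),
      mul_nonneg (sub_nonneg.2 (hb ▸ hρb y)) (mul_nonneg (sq_nonneg a) (sq_nonneg ‖g x‖))]
  -- pointwise ENNReal inequality
  set A : ℝ≥0∞ := ENNReal.ofReal (3/2 * ρb) with hAdef
  set B : ℝ≥0∞ := ENNReal.ofReal (ρb/2) with hBdef
  have hpt : ∀ x y : E3, Ge (x - y) * Q y * Q x + Ge (x - y) * R y * H x
      ≤ Ge (x - y) * (A * H x + B * H y) := by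
    intro x y
    have hre : Ge (x - y) * Q y * Q x + Ge (x - y) * R y * H x
        = Ge (x - y) * (Q y * Q x + R y * H x) := by ring
    rw [hre]
    refine mul_le_mul' le_rfl ?_
    have hL : Q y * Q x + R y * H x
        = ENNReal.ofReal (ρ y * ‖g y‖ * (ρ x * ‖g x‖) + ρ y * h x) := by
      simp only [hQdef, hRdef, hHdef]
      rw [← ENNReal.ofReal_mul (mul_nonneg (hρ0 y) (norm_nonneg _)),
        ← ENNReal.ofReal_mul (hρ0 y),
        ← ENNReal.ofReal_add (mul_nonneg (mul_nonneg (hρ0 y) (norm_nonneg _))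
          (mul_nonneg (hρ0 x) (norm_nonneg _))) (mul_nonneg (hρ0 y) (hh0 x))]
    have hR : A * H x + B * H y = ENNReal.ofReal (3/2 * ρb * h x + ρb/2 * h y) := by
      simp only [hAdef, hBdef, hHdef]
      rw [← ENNReal.ofReal_mul (by linarith : (0:ℝ) ≤ 3/2 * ρb),
        ← ENNReal.ofReal_mul (by linarith : (0:ℝ) ≤ ρb/2),
        ← ENNReal.ofReal_add (mul_nonneg (by linarith) (hh0 x))
          (mul_nonneg (by linarith) (hh0 y))]
    rw [hL, hR]
    exact ENNReal.ofReal_le_ofReal (hreal x y)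
  -- main chain
  rw [← Real.norm_eq_abs]
  have hRHS0 : 0 ≤ 8 * Real.pi * k * ρb / lam ^ 2 * ∫ x, h x := by
    have : (0:ℝ) ≤ 8 * Real.pi * k * ρb / lam ^ 2 := by positivity
    exact mul_nonneg this hIh0
  refine le_trans (norm_integral_le_lintegral_norm _)
    (ENNReal.toReal_le_of_le_ofReal hRHS0 ?_)
  have hswap : ∫⁻ x, ∫⁻ y, Ge (x - y) * H y = (∫⁻ z, Ge z) * ∫⁻ x, H x := by
    rw [lintegral_lintegral_swap (((hGem.comp (measurable_fst.sub measurable_snd)).mul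
      (hHm.comp measurable_snd)).aemeasurable)]
    have h1 : ∀ y : E3, ∫⁻ x, Ge (x - y) * H y = (∫⁻ z, Ge z) * H y := fun y => by
      rw [lintegral_mul_const _ (hGsub' y), lintegral_sub_right_eq_self Ge y, mul_comm]
    simp only [h1]
    exact lintegral_const_mul _ hHm
  calc ∫⁻ x, ENNReal.ofReal ‖f x‖
      ≤ ∫⁻ x, ((∫⁻ y, Ge (x - y) * Q y) * Q x + (∫⁻ y, Ge (x - y) * R y) * H x) := by
        refine lintegral_mono fun x => ?_
        rw [ofReal_norm]; exact key x
    _ = ∫⁻ x, ∫⁻ y, (Ge (x - y) * Q y * Q x + Ge (x - y) * R y * H x) := by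
        refine lintegral_congr fun x => ?_
        rw [lintegral_add_left (f := fun y => Ge (x - y) * Q y * Q x) (((hGsub x).mul hQm).mul_const _),
          lintegral_mul_const (f := fun y => Ge (x - y) * Q y) _ ((hGsub x).mul hQm),
          lintegral_mul_const (f := fun y => Ge (x - y) * R y) _ ((hGsub x).mul hRm)]
    _ ≤ ∫⁻ x, ∫⁻ y, Ge (x - y) * (A * H x + B * H y) :=
        lintegral_mono fun x => lintegral_mono fun y => hpt x y
    _ = ∫⁻ x, (A * (∫⁻ z, Ge z) * H x + B * ∫⁻ y, Ge (x - y) * H y) := by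
        refine lintegral_congr fun x => ?_
        have e1 : ∀ y, Ge (x - y) * (A * H x + B * H y)
            = Ge (x - y) * (A * H x) + B * (Ge (x - y) * H y) := fun y => by ring
        simp only [e1]
        rw [lintegral_add_left ((hGsub x).mul_const _),
          lintegral_mul_const _ (hGsub x),
          lintegral_const_mul' _ _ ENNReal.ofReal_ne_top,
          lint_sub_left Ge x, ← hBdef]
        ring
    _ = A * (∫⁻ z, Ge z) * (∫⁻ x, H x) + B * ((∫⁻ z, Ge z) * ∫⁻ x, H x) := by
        rw [lintegral_add_left (f := fun x => A * (∫⁻ z, Ge z) * H x) ((measurable_const.mul hHm) : Measurable fun x => A * (∫⁻ z, Ge z) * H x),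
          lintegral_const_mul _ hHm,
          lintegral_const_mul' B _ ENNReal.ofReal_ne_top, hswap]
    _ ≤ ENNReal.ofReal (8 * Real.pi * k * ρb / lam ^ 2 * ∫ x, h x) := by
        rw [hIG, hHlint, hAdef, hBdef,
          ← ENNReal.ofReal_mul (by linarith : (0:ℝ) ≤ 3/2 * ρb),
          ← ENNReal.ofReal_mul (by positivity),
          ← ENNReal.ofReal_mul (by positivity),
          ← ENNReal.ofReal_mul (by linarith : (0:ℝ) ≤ ρb/2),
          ← ENNReal.ofReal_add (by positivity) (by positivity)]
        refine ENNReal.ofReal_le_ofReal (le_of_eq ?_)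
        ring

/-- Weak–strong uniqueness alignment estimate: for the Yukawa kernel `G`, a
bounded density `0 ≤ ρ ≤ ρ̄` supported in a bounded set `D`, and `g ∈ L²`
supported in `D`,
`|∫ (G*(ρg))ᵀ(ρg) − (G*ρ) ρ‖g‖²| ≤ (8πkρ̄/λ²) ∫ ρ‖g‖²`. -/
theorem yukawa_relative_energy_bound (k lam : ℝ) (hk : 0 < k) (hlam : 0 < lam)
    (D : Set (EuclideanSpace ℝ (Fin 3))) (hD : Bornology.IsBounded D)
    (hDm : MeasurableSet D)
    (ρ : EuclideanSpace ℝ (Fin 3) → ℝ) (hρm : Measurable ρ)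
    (hρsupp : Function.support ρ ⊆ D)
    (ρb : ℝ)
    (hρ0 : ∀ᵐ x : EuclideanSpace ℝ (Fin 3), 0 ≤ ρ x)
    (hρb : ∀ᵐ x : EuclideanSpace ℝ (Fin 3), ρ x ≤ ρb)
    (g : EuclideanSpace ℝ (Fin 3) → EuclideanSpace ℝ (Fin 3))
    (hg : MemLp g 2 (volume : Measure (EuclideanSpace ℝ (Fin 3))))
    (hgsupp : Function.support g ⊆ D) :
    |∫ x : EuclideanSpace ℝ (Fin 3),
        (inner (𝕜 := ℝ)
            (∫ y, (k * Real.exp (-lam * ‖x - y‖) / ‖x - y‖) • (ρ y • g y))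
            (ρ x • g x)
          - (∫ y, k * Real.exp (-lam * ‖x - y‖) / ‖x - y‖ * ρ y)
              * (ρ x * ‖g x‖ ^ 2))|
      ≤ 8 * Real.pi * k * ρb / lam ^ 2
          * ∫ x : EuclideanSpace ℝ (Fin 3), ρ x * ‖g x‖ ^ 2 := by
  have hρb0 : 0 ≤ ρb := by
    obtain ⟨x, h1, h2⟩ := (hρ0.and hρb).exists
    linarith
  set ρ' : E3 → ℝ := fun x => max 0 (min (ρ x) ρb) with hρ'def
  have hρ'm : Measurable ρ' := measurable_const.max (hρm.min measurable_const)
  have hρ'0 : ∀ x, 0 ≤ ρ' x := fun x => le_max_left _ _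
  have hρ'b : ∀ x, ρ' x ≤ ρb := fun x => max_le hρb0 (min_le_right _ _)
  have hρeq : ρ =ᵐ[volume] ρ' := by
    filter_upwards [hρ0, hρb] with x h1 h2
    simp only [hρ'def, min_eq_left h2, max_eq_right h1]
  set g' : E3 → E3 := hg.1.mk g with hg'def
  have hgg' : g =ᵐ[volume] g' := hg.1.ae_eq_mk
  have hg'm : Measurable g' := hg.1.stronglyMeasurable_mk.measurable
  have hg' : MemLp g' 2 (volume : Measure E3) := hg.ae_eq hgg'
  have hinner : ∀ x : E3,
      (∫ y, (k * Real.exp (-lam * ‖x - y‖) / ‖x - y‖) • (ρ y • g y))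
        = ∫ y, (k * Real.exp (-lam * ‖x - y‖) / ‖x - y‖) • (ρ' y • g' y) := fun x =>
    integral_congr_ae (by filter_upwards [hρeq, hgg'] with y h1 h2; rw [h1, h2])
  have hc : ∀ x : E3,
      (∫ y, k * Real.exp (-lam * ‖x - y‖) / ‖x - y‖ * ρ y)
        = ∫ y, k * Real.exp (-lam * ‖x - y‖) / ‖x - y‖ * ρ' y := fun x =>
    integral_congr_ae (by filter_upwards [hρeq] with y h1; rw [h1])
  have hout : (fun x : E3 =>
      (inner (𝕜 := ℝ)
          (∫ y, (k * Real.exp (-lam * ‖x - y‖) / ‖x - y‖) • (ρ y • g y)) (ρ x • g x)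
        - (∫ y, k * Real.exp (-lam * ‖x - y‖) / ‖x - y‖ * ρ y) * (ρ x * ‖g x‖ ^ 2)))
      =ᵐ[volume] (fun x : E3 =>
      (inner (𝕜 := ℝ)
          (∫ y, (k * Real.exp (-lam * ‖x - y‖) / ‖x - y‖) • (ρ' y • g' y)) (ρ' x • g' x)
        - (∫ y, k * Real.exp (-lam * ‖x - y‖) / ‖x - y‖ * ρ' y) * (ρ' x * ‖g' x‖ ^ 2))) := by
    filter_upwards [hρeq, hgg'] with x h1 h2
    rw [hinner x, hc x, h1, h2]
  have hrhs : (fun x : E3 => ρ x * ‖g x‖ ^ 2) =ᵐ[volume] fun x => ρ' x * ‖g' x‖ ^ 2 := by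
    filter_upwards [hρeq, hgg'] with x h1 h2
    rw [h1, h2]
  rw [integral_congr_ae hout, integral_congr_ae hrhs]
  exact aux_bound k lam hk hlam ρ' hρ'm ρb hρ'0 hρ'b g' hg'm hg'
end
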